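/- Let R be a unital alternative ring with nontrivial idempotent e₁ and e₂ = 1 − e₁, k-torsion free for every k ∈ {2, 3, n−1, n−3} with k ≥ 1, satisfying conditions (1), (2), (3) and (4), and let D : R → R be a multiplicative Lie n-derivation (n ≥ 2). Then the diagonal Peirce part of D(e₁) is central: (e₁*D(e₁))*e₁ + (e₂*D(e₁))*e₂ ∈ Z(R). -/

import Mathlib

/-- The commutative center of a (possibly non-associative, non-unital) ring. -/
def rctr (R : Type*) [NonUnitalNonAssocRing R] : Set R := {z | ∀ x, z * x = x * z}

/-- `R` is an alternative ring. -/
def IsAlt (R : Type*) [NonUnitalNonAssocRing R] : Prop :=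
  ∀ x y : R, (x * x) * y = x * (x * y) ∧ (y * x) * x = y * (x * x)

/-- Peirce components relative to an idempotent `e`. -/
def P11 {R : Type*} [NonUnitalNonAssocRing R] (e : R) : Set R := {x | e * x = x ∧ x * e = x}
def P12 {R : Type*} [NonUnitalNonAssocRing R] (e : R) : Set R := {x | e * x = x ∧ x * e = 0}
def P21 {R : Type*} [NonUnitalNonAssocRing R] (e : R) : Set R := {x | e * x = 0 ∧ x * e = x}
def P22 {R : Type*} [NonUnitalNonAssocRing R] (e : R) : Set R := {x | e * x = 0 ∧ x * e = 0}

/-- The iterated commutator `p_n`: `p_1(x) = x`,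
`p_n(x_1,…,x_n) = [p_{n-1}(x_1,…,x_{n-1}), x_n]`. -/
def pn {R : Type*} [NonUnitalNonAssocRing R] : (n : ℕ) → (Fin n → R) → R
  | 0, _ => 0
  | 1, x => x 0
  | (m+2), x =>
      pn (m+1) (fun i => x i.castSucc) * x (Fin.last (m+1))
        - x (Fin.last (m+1)) * pn (m+1) (fun i => x i.castSucc)

/-- A (not necessarily additive) map `D` is a multiplicative Lie `n`-derivation. -/
def IsMultLieNDeriv {R : Type*} [NonUnitalNonAssocRing R] (n : ℕ) (D : R → R) : Prop :=
  ∀ x : Fin n → R, D (pn n x) = ∑ i : Fin n, pn n (Function.update x i (D (x i)))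

section Infra
variable {R : Type*} [NonAssocRing R]

/-- associator -/
def asc (x y z : R) : R := x*y*z - x*(y*z)

lemma asc_ll (halt : IsAlt R) (x y : R) : asc x x y = 0 := by
  have := (halt x y).1; simp [asc, this]

lemma asc_rr (halt : IsAlt R) (x y : R) : asc x y y = 0 := by
  have := (halt y x).2; simp [asc, this]

lemma asc_swap12 (halt : IsAlt R) (x y z : R) : asc y x z = - asc x y z := by
  have h : asc (x+y) (x+y) z = asc x x z + asc x y z + asc y x z + asc y y z := by
    simp only [asc, add_mul, mul_add]; abel
  rw [asc_ll halt, asc_ll halt, asc_ll halt] at h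
  simp only [zero_add, add_zero] at h
  exact eq_neg_of_add_eq_zero_right h.symm

lemma asc_swap23 (halt : IsAlt R) (x y z : R) : asc x z y = - asc x y z := by
  have h : asc x (y+z) (y+z) = asc x y y + asc x y z + asc x z y + asc x z z := by
    simp only [asc, add_mul, mul_add]; abel
  rw [asc_rr halt, asc_rr halt, asc_rr halt] at h
  simp only [zero_add, add_zero] at h
  exact eq_neg_of_add_eq_zero_right h.symm

lemma asc_swap13 (halt : IsAlt R) (x y z : R) : asc z y x = - asc x y z := by
  rw [show asc z y x = - asc y z x from asc_swap12 halt y z x,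
      show asc y z x = - asc y x z from asc_swap23 halt y x z,
      show asc y x z = - asc x y z from asc_swap12 halt x y z]
  simp

lemma asc_cyc (halt : IsAlt R) (x y z : R) : asc x y z = asc y z x := by
  rw [show asc y z x = - asc y x z from asc_swap23 halt y x z,
      show asc y x z = - asc x y z from asc_swap12 halt x y z]
  simp

lemma flex (halt : IsAlt R) (x y : R) : (x*y)*x = x*(y*x) := by
  have h : asc x y x = 0 := by
    rw [show asc x y x = - asc x x y from asc_swap23 halt x x y, asc_ll halt]; simp
  simpa [asc, sub_eq_zero] using h

end Infra

section Table
variable {R : Type*} [NonAssocRing R]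

-- P12 * P11 = 0
lemma t1 (halt : IsAlt R) {e y v : R}
    (hy1 : e*y = y) (hy2 : y*e = 0) (hv1 : e*v = v) (hv2 : v*e = v) : y * v = 0 := by
  have h1 : asc y e v = -(y*v) := by simp [asc, hy2, hv1]
  have h2 : asc v e y = 0 := by simp [asc, hv2, hy1]
  have h3 := asc_swap13 halt v e y
  rw [h1, h2] at h3
  simpa using h3.symm

-- P22 * P12 = 0
lemma t8 (halt : IsAlt R) {e s y : R}
    (hs1 : e*s = 0) (hs2 : s*e = 0) (hy1 : e*y = y) (hy2 : y*e = 0) : s * y = 0 := by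
  have h1 : asc s e y = -(s*y) := by simp [asc, hs2, hy1]
  have h2 : asc y e s = 0 := by simp [asc, hy2, hs1]
  have h3 := asc_swap13 halt y e s
  rw [h1, h2] at h3
  simpa using h3.symm

-- P11 * P12 ⊆ P12
lemma t5 (halt : IsAlt R) {e v y : R}
    (hv1 : e*v = v) (hv2 : v*e = v) (hy1 : e*y = y) (hy2 : y*e = 0) :
    e*(v*y) = v*y ∧ (v*y)*e = 0 := by
  have hyv : y*v = 0 := t1 halt hy1 hy2 hv1 hv2
  constructor
  · have h1 : asc e y v = 0 := by simp [asc, hy1, hyv]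
    have h2 := asc_swap23 halt e v y
    rw [h1] at h2
    have : asc e v y = 0 := by simpa using h2
    have h3 : asc e v y = v*y - e*(v*y) := by simp [asc, hv1]
    rw [h3] at this; exact (sub_eq_zero.mp this).symm
  · have h1 : asc y v e = 0 := by simp [asc, hyv, hv2]
    have h2 := asc_swap12 halt y v e
    rw [h1] at h2
    have h3 : asc v y e = (v*y)*e := by simp [asc, hy2]
    rw [h3] at h2; simpa using h2

-- P12 * P12 ⊆ P21
lemma t2 (halt : IsAlt R) {e x y : R}
    (hx1 : e*x = x) (hx2 : x*e = 0) (hy1 : e*y = y) (hy2 : y*e = 0) :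
    e*(x*y) = 0 ∧ (x*y)*e = x*y := by
  have hxey : asc x e y = -(x*y) := by simp [asc, hx2, hy1]
  constructor
  · have h2 := asc_swap12 halt x e y
    rw [hxey] at h2
    have h3 : asc e x y = x*y - e*(x*y) := by simp [asc, hx1]
    rw [h3] at h2
    -- x*y - e*(x*y) = x*y  ⇒ e*(x*y) = 0
    have : x*y - e*(x*y) = x*y := by rw [h2]; simp
    have := sub_eq_self.mp this
    simpa using this
  · have h2 := asc_swap23 halt x e y
    rw [hxey] at h2
    have h3 : asc x y e = (x*y)*e := by simp [asc, hy2]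
    rw [h3] at h2
    simpa using h2

-- P12 * P21 ⊆ P11
lemma t3 (halt : IsAlt R) {e x z : R}
    (hx1 : e*x = x) (hx2 : x*e = 0) (hz1 : e*z = 0) (hz2 : z*e = z) :
    e*(x*z) = x*z ∧ (x*z)*e = x*z := by
  have h0 : asc x e z = 0 := by simp [asc, hx2, hz1]
  constructor
  · have h2 := asc_swap12 halt x e z
    rw [h0] at h2
    have h3 : asc e x z = x*z - e*(x*z) := by simp [asc, hx1]
    rw [h3] at h2
    have : x*z - e*(x*z) = 0 := by rw [h2]; simp
    exact (sub_eq_zero.mp this).symm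
  · have h2 := asc_swap23 halt x e z
    rw [h0] at h2
    have h3 : asc x z e = (x*z)*e - x*z := by simp [asc, hz2]
    rw [h3] at h2
    have : (x*z)*e - x*z = 0 := by rw [h2]; simp
    exact sub_eq_zero.mp this

-- P21 * P12 ⊆ P22
lemma t7 (halt : IsAlt R) {e z x : R}
    (hz1 : e*z = 0) (hz2 : z*e = z) (hx1 : e*x = x) (hx2 : x*e = 0) :
    e*(z*x) = 0 ∧ (z*x)*e = 0 := by
  have h0 : asc z e x = 0 := by simp [asc, hz2, hx1]
  constructor
  · have h2 := asc_swap12 halt z e x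
    rw [h0] at h2
    have h3 : asc e z x = -(e*(z*x)) := by simp [asc, hz1]
    rw [h3] at h2
    simpa using h2.symm
  · have h2 := asc_swap23 halt z e x
    rw [h0] at h2
    have h3 : asc z x e = (z*x)*e := by simp [asc, hx2]
    rw [h3] at h2
    simpa using h2

-- P12 * P22 ⊆ P12
lemma t4 (halt : IsAlt R) {e x s : R}
    (hx1 : e*x = x) (hx2 : x*e = 0) (hs1 : e*s = 0) (hs2 : s*e = 0) :
    e*(x*s) = x*s ∧ (x*s)*e = 0 := by
  have h0 : asc x e s = 0 := by simp [asc, hx2, hs1]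
  constructor
  · have h2 := asc_swap12 halt x e s
    rw [h0] at h2
    have h3 : asc e x s = x*s - e*(x*s) := by simp [asc, hx1]
    rw [h3] at h2
    have : x*s - e*(x*s) = 0 := by rw [h2]; simp
    exact (sub_eq_zero.mp this).symm
  · have h2 := asc_swap23 halt x e s
    rw [h0] at h2
    have h3 : asc x s e = (x*s)*e := by simp [asc, hs2]
    rw [h3] at h2
    simpa using h2

-- P11 closed
lemma t11 (halt : IsAlt R) {e u v : R}
    (hu1 : e*u = u) (hu2 : u*e = u) (hv1 : e*v = v) (hv2 : v*e = v) :
    e*(u*v) = u*v ∧ (u*v)*e = u*v := by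
  have h0 : asc u e v = 0 := by simp [asc, hu2, hv1]
  constructor
  · have h2 := asc_swap12 halt u e v
    rw [h0] at h2
    have h3 : asc e u v = u*v - e*(u*v) := by simp [asc, hu1]
    rw [h3] at h2
    have : u*v - e*(u*v) = 0 := by rw [h2]; simp
    exact (sub_eq_zero.mp this).symm
  · have h2 := asc_swap23 halt u e v
    rw [h0] at h2
    have h3 : asc u v e = (u*v)*e - u*v := by simp [asc, hv2]
    rw [h3] at h2
    have : (u*v)*e - u*v = 0 := by rw [h2]; simp
    exact sub_eq_zero.mp this

-- P22 * P11 = 0 and P11 * P22 = 0 (needs 3-torsion-freeness)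
lemma t9 (halt : IsAlt R) (h3 : ∀ z : R, z + z + z = 0 → z = 0) {e s u : R}
    (hs1 : e*s = 0) (hs2 : s*e = 0) (hu1 : e*u = u) (hu2 : u*e = u) :
    s*u = 0 ∧ u*s = 0 := by
  have hsf : s*(1-e) = s := by simp [mul_sub, hs2]
  have hfs : (1-e)*s = s := by simp [sub_mul, hs1]
  have huf : u*(1-e) = 0 := by simp [mul_sub, hu2]
  have hfu : (1-e)*u = 0 := by simp [sub_mul, hu1]
  have A1 : asc s (1-e) u = s*u := by simp [asc, hsf, hfu]
  have A2 : asc u (1-e) s = -(u*s) := by simp [asc, huf, hfs]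
  have hsym : s*u = u*s := by
    have h := asc_swap13 halt s (1-e) u
    rw [A1, A2] at h
    simpa using h.symm
  have A3 : asc (1-e) s u = s*u - (1-e)*(s*u) := by simp [asc, hfs]
  have e1 : s*u - (1-e)*(s*u) = -(s*u) := by
    have h := asc_swap12 halt s (1-e) u
    rw [A1, A3] at h; exact h
  have A4 : asc (1-e) u s = -((1-e)*(u*s)) := by simp [asc, hfu]
  have e2 : -((1-e)*(u*s)) = -(s*u - (1-e)*(s*u)) := by
    have h := asc_swap23 halt (1-e) s u
    rw [A3, A4] at h; exact h
  -- from e1: (1-e)*(s*u) = s*u + s*u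
  have e1' : (1-e)*(s*u) = s*u + s*u := by
    have h : (1-e)*(s*u) = s*u - (s*u - (1-e)*(s*u)) := by abel
    rw [e1] at h
    simpa [sub_neg_eq_add] using h
  have key : s*u + s*u + s*u = 0 := by
    rw [← hsym] at e2
    rw [e1'] at e2
    have e2' : -(s*u + s*u) = s*u := by rw [e2]; abel
    have k2 : s*u + (s*u + s*u) = 0 := eq_neg_iff_add_eq_zero.mp e2'.symm
    rw [add_assoc]; exact k2
  have h0 : s*u = 0 := h3 _ key
  exact ⟨h0, by rw [← hsym, h0]⟩

end Table

section More
variable {R : Type*} [NonAssocRing R]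

-- (P11, P11, P12) associate
lemma t10 (halt : IsAlt R) {e u v y : R}
    (hu1 : e*u = u) (hu2 : u*e = u) (hv1 : e*v = v) (hv2 : v*e = v)
    (hy1 : e*y = y) (hy2 : y*e = 0) : (u*v)*y = u*(v*y) := by
  have hyu : y*u = 0 := t1 halt hy1 hy2 hu1 hu2
  have huv := t11 halt hu1 hu2 hv1 hv2
  have hyuv : y*(u*v) = 0 := t1 halt hy1 hy2 huv.1 huv.2
  have h1 : asc y u v = 0 := by simp [asc, hyu, hyuv]
  have h2 := asc_cyc halt u v y
  have h3 := asc_cyc halt v y u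
  -- asc u v y = asc v y u = asc y u v = 0
  have : asc u v y = 0 := by rw [h2, h3, h1]
  simpa [asc, sub_eq_zero] using this

-- (P11, P12, P22) associate
lemma t12 (halt : IsAlt R) (h3 : ∀ z : R, z + z + z = 0 → z = 0) {e u y s : R}
    (hu1 : e*u = u) (hu2 : u*e = u) (hy1 : e*y = y) (hy2 : y*e = 0)
    (hs1 : e*s = 0) (hs2 : s*e = 0) : (u*y)*s = u*(y*s) := by
  have hys := t4 halt hy1 hy2 hs1 hs2
  have h4 : (y*s)*u = 0 := t1 halt hys.1 hys.2 hu1 hu2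
  have h5 : s*u = 0 := (t9 halt h3 hs1 hs2 hu1 hu2).1
  have h1 : asc y s u = 0 := by simp [asc, h4, h5]
  have h2 := asc_cyc halt u y s
  have : asc u y s = 0 := by rw [h2, h1]
  simpa [asc, sub_eq_zero] using this

/-- the P12-projection as an additive hom -/
def ph (e : R) : R →+ R :=
  AddMonoidHom.mk' (fun y => e*y - e*(y*e)) (fun a b => by
    simp only [mul_add, add_mul]; abel)

lemma ph_apply (e y : R) : ph e y = e*y - e*(y*e) := rfl

lemma e_mul_e_mul (halt : IsAlt R) {e : R} (he : e*e = e) (y : R) : e*(e*y) = e*y := by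
  have h := asc_ll halt e y
  have : (e*e)*y = e*(e*y) := by simpa [asc, sub_eq_zero] using h
  rw [← this, he]

lemma mul_e_mul_e (halt : IsAlt R) {e : R} (he : e*e = e) (y : R) : (y*e)*e = y*e := by
  have h := asc_rr halt y e
  have : (y*e)*e = y*(e*e) := by simpa [asc, sub_eq_zero] using h
  rw [this, he]

lemma ph_mul_e (halt : IsAlt R) {e : R} (he : e*e = e) (y : R) : ph e (y*e) = 0 := by
  rw [ph_apply, mul_e_mul_e halt he, sub_self]

lemma ph_e_mul (halt : IsAlt R) {e : R} (he : e*e = e) (y : R) : ph e (e*y) = ph e y := by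
  rw [ph_apply, ph_apply, e_mul_e_mul halt he, flex halt e y, e_mul_e_mul halt he]

lemma ph_of_P12 {e z : R} (hz1 : e*z = z) (hz2 : z*e = 0) : ph e z = z := by
  rw [ph_apply, hz1, hz2, mul_zero, sub_zero]

lemma ph_of_P11 {e z : R} (hz1 : e*z = z) (hz2 : z*e = z) : ph e z = 0 := by
  rw [ph_apply, hz2, hz1, sub_self]

lemma ph_of_P21 {e z : R} (hz1 : e*z = 0) (hz2 : z*e = z) : ph e z = 0 := by
  rw [ph_apply, hz2, hz1, sub_self]

lemma ph_of_P22 {e z : R} (hz1 : e*z = 0) (hz2 : z*e = 0) : ph e z = 0 := by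
  rw [ph_apply, hz2, hz1, mul_zero, sub_zero]

/-- iterated bracket with a fixed element -/
def itb (c : R) : ℕ → R → R
  | 0, y => y
  | (k+1), y => itb c k y * c - c * itb c k y

lemma zsmulmulP (z : ℤ) (a b : R) : (z • a) * b = z • (a * b) :=
  map_zsmul (AddMonoidHom.mulRight b) z a

lemma mulzsmulP (z : ℤ) (a b : R) : a * (z • b) = z • (a * b) :=
  map_zsmul (AddMonoidHom.mulLeft a) z b

lemma itb_zsmul (c : R) (z : ℤ) (y : R) : ∀ k, itb c k (z • y) = z • itb c k y := by
  intro k; induction k with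
  | zero => rfl
  | succ k ih => rw [itb, itb, ih, zsmulmulP, mulzsmulP, ← smul_sub]

lemma itb_neg (c y : R) (k : ℕ) : itb c k (-y) = - itb c k y := by
  have := itb_zsmul c (-1) y k
  simpa using this

lemma itb_e_P12 {e x : R} (hx1 : e*x = x) (hx2 : x*e = 0) :
    ∀ k, itb e k x = ((-1:ℤ)^k) • x := by
  intro k; induction k with
  | zero => simp [itb]
  | succ k ih =>
      rw [itb, ih, zsmulmulP, mulzsmulP, ← smul_sub, hx1, hx2, zero_sub,
        pow_succ, mul_smul]
      simp

lemma itb_f_P12 {e x : R} (hx1 : e*x = x) (hx2 : x*e = 0) :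
    ∀ k, itb (1-e) k x = x := by
  intro k; induction k with
  | zero => rfl
  | succ k ih =>
      rw [itb, ih]
      have h1 : x*(1-e) = x := by simp [mul_sub, hx2]
      have h2 : (1-e)*x = 0 := by simp [sub_mul, hx1]
      rw [h1, h2, sub_zero]

lemma ph_itb_e (halt : IsAlt R) {e : R} (he : e*e = e) (y : R) :
    ∀ k, ph e (itb e k y) = ((-1:ℤ)^k) • ph e y := by
  intro k; induction k with
  | zero => simp [itb]
  | succ k ih =>
      rw [itb, map_sub, ph_mul_e halt he, ph_e_mul halt he, ih, zero_sub, pow_succ,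
        mul_smul]
      simp

lemma ph_itb_f (halt : IsAlt R) {e : R} (he : e*e = e) (y : R) :
    ∀ k, ph e (itb (1-e) k y) = ph e y := by
  intro k; induction k with
  | zero => rfl
  | succ k ih =>
      have hkey : itb (1-e) k y * (1-e) - (1-e) * itb (1-e) k y
          = e * itb (1-e) k y - itb (1-e) k y * e := by
        simp only [mul_sub, sub_mul, mul_one, one_mul]; abel
      rw [itb, hkey, map_sub, ph_e_mul halt he, ph_mul_e halt he, sub_zero, ih]

end More

section PN
variable {R : Type*} [NonAssocRing R]

lemma pn_step (m : ℕ) (x : Fin (m+2) → R) :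
    pn (m+2) x = pn (m+1) (fun i => x i.castSucc) * x (Fin.last (m+1))
      - x (Fin.last (m+1)) * pn (m+1) (fun i => x i.castSucc) := rfl

lemma pn_one (x : Fin 1 → R) : pn 1 x = x 0 := rfl

lemma pn_aux (k : ℕ) (c : R) : ∀ (x : Fin (k+2) → R),
    (∀ j : Fin (k+2), 2 ≤ (j:ℕ) → x j = c) →
    pn (k+2) x = itb c k (x 0 * x 1 - x 1 * x 0) := by
  induction k with
  | zero =>
      intro x _
      rw [pn_step, pn_one]
      have h2 : Fin.last 1 = (1 : Fin 2) := rfl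
      rw [h2]
      simp only [Fin.castSucc_zero]
      rfl
  | succ k ih =>
      intro x h
      rw [pn_step]
      have hl : x (Fin.last (k+2)) = c := h _ (by simp [Fin.last])
      have hpre : ∀ j : Fin (k+2), 2 ≤ (j:ℕ) → (fun i => x i.castSucc) j = c := by
        intro j hj
        exact h j.castSucc (by simpa using hj)
      rw [hl, ih _ hpre]
      simp only [Fin.castSucc_zero, Fin.castSucc_one]
      rfl

lemma pn_aux2 (c g : R) : ∀ (N : ℕ) (k : ℕ), k ≤ N → ∀ (x : Fin (N+3) → R),
    (∀ j : Fin (N+3), 2 ≤ (j:ℕ) → (j:ℕ) ≠ k+2 → x j = c) →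
    (∀ (hlt : k+2 < N+3), x ⟨k+2, hlt⟩ = g) →
    pn (N+3) x = itb c (N-k)
      (itb c k (x 0 * x 1 - x 1 * x 0) * g - g * itb c k (x 0 * x 1 - x 1 * x 0)) := by
  intro N
  induction N with
  | zero =>
      intro k hk x hx hg
      interval_cases k
      rw [pn_step]
      have hl : Fin.last 2 = (⟨2, by omega⟩ : Fin 3) := rfl
      rw [hl, hg (by omega)]
      have hpre := pn_aux 0 c (fun i : Fin 2 => x i.castSucc) (by
        intro j hj; exfalso; omega)
      rw [hpre]
      simp only [Fin.castSucc_zero, Fin.castSucc_one]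
      rfl
  | succ N ih =>
      intro k hk x hx hg
      rcases Nat.lt_or_ge k (N+1) with hkN | hkN
      · have hkN' : k ≤ N := by omega
        rw [pn_step]
        have hl : x (Fin.last (N+3)) = c := by
          apply hx
          · simp [Fin.last]
          · simp only [Fin.val_last]; omega
        have hpre : ∀ j : Fin (N+3), 2 ≤ (j:ℕ) → (j:ℕ) ≠ k+2 →
            (fun i => x i.castSucc) j = c := by
          intro j hj hj2
          exact hx j.castSucc (by simpa using hj) (by simpa using hj2)
        have hgpre : ∀ (hlt : k+2 < N+3),
            (fun i : Fin (N+3) => x i.castSucc) ⟨k+2, hlt⟩ = g := by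
          intro hlt
          have hcs : (⟨k+2, hlt⟩ : Fin (N+3)).castSucc = (⟨k+2, by omega⟩ : Fin (N+4)) := by
            simp [Fin.ext_iff]
          simp only [hcs]
          exact hg (by omega)
        rw [hl, ih k hkN' _ hpre hgpre]
        simp only [Fin.castSucc_zero, Fin.castSucc_one]
        have hsub : N + 1 - k = (N - k) + 1 := by omega
        rw [hsub]
        rfl
      · have hk1 : k = N+1 := by omega
        subst hk1
        rw [pn_step]
        have hl : x (Fin.last (N+3)) = g := by
          have hlast : (Fin.last (N+3)) = (⟨N+1+2, by omega⟩ : Fin (N+4)) := by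
            simp [Fin.ext_iff]
          rw [hlast]; exact hg (by omega)
        have hpre : ∀ j : Fin (N+3), 2 ≤ (j:ℕ) → (fun i => x i.castSucc) j = c := by
          intro j hj
          apply hx j.castSucc (by simpa using hj)
          simp only [Fin.coe_castSucc]
          omega
        rw [hl, pn_aux (N+1) c _ hpre]
        simp only [Fin.castSucc_zero, Fin.castSucc_one]
        have hsub : N + 1 - (N+1) = 0 := by omega
        rw [hsub]
        rfl

end PN

section UPD
variable {R : Type*} [NonAssocRing R]

lemma pn_upd0 (m : ℕ) (A : Fin (m+2) → R) (c w : R)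
    (htail : ∀ j : Fin (m+2), 2 ≤ (j:ℕ) → A j = c) :
    pn (m+2) (Function.update A 0 w) = itb c m (w * A 1 - A 1 * w) := by
  have h := pn_aux m c (Function.update A 0 w) (by
    intro j hj
    rw [Function.update_of_ne (a := j) (a' := 0) (by intro h; subst h; simp at hj)]
    exact htail j hj)
  rw [h, Function.update_self,
    Function.update_of_ne (by simp [Fin.ext_iff])]

lemma pn_upd1 (m : ℕ) (A : Fin (m+2) → R) (c w : R)
    (htail : ∀ j : Fin (m+2), 2 ≤ (j:ℕ) → A j = c) :
    pn (m+2) (Function.update A 1 w) = itb c m (A 0 * w - w * A 0) := by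
  have h := pn_aux m c (Function.update A 1 w) (by
    intro j hj
    rw [Function.update_of_ne (by simp [Fin.ext_iff]; omega)]
    exact htail j hj)
  rw [h, Function.update_self,
    Function.update_of_ne (by simp [Fin.ext_iff])]

lemma pn_updj (q : ℕ) (A : Fin (q+3) → R) (c w : R)
    (htail : ∀ j : Fin (q+3), 2 ≤ (j:ℕ) → A j = c) (i : Fin (q+1)) :
    pn (q+3) (Function.update A i.succ.succ w)
      = itb c (q - i) (itb c i (A 0 * A 1 - A 1 * A 0) * w
          - w * itb c i (A 0 * A 1 - A 1 * A 0)) := by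
  have hk : (i:ℕ) ≤ q := by omega
  have h := pn_aux2 c w q i hk (Function.update A i.succ.succ w) (by
    intro j hj hj2
    rw [Function.update_of_ne (by simp [Fin.ext_iff, Fin.val_succ]; omega)]
    exact htail j hj) (by
    intro hlt
    have : (⟨(i:ℕ)+2, hlt⟩ : Fin (q+3)) = i.succ.succ := by
      simp [Fin.ext_iff, Fin.val_succ]
    rw [this, Function.update_self])
  rw [h,
    Function.update_of_ne (a := 0) (a' := i.succ.succ) (by intro h; have := congrArg Fin.val h; simp only [Fin.val_succ, Fin.val_zero, Fin.val_one] at this; omega),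
    Function.update_of_ne (a := 1) (a' := i.succ.succ) (by intro h; have := congrArg Fin.val h; simp only [Fin.val_succ, Fin.val_zero, Fin.val_one] at this; omega)]

lemma EQgen (m : ℕ) (D : R → R) (hD : IsMultLieNDeriv (m+2) D) (a₀ a₁ c : R) :
    D (itb c m (a₀ * a₁ - a₁ * a₀))
      = itb c m (D a₀ * a₁ - a₁ * D a₀) + itb c m (a₀ * D a₁ - D a₁ * a₀)
        + ∑ i : Fin m, itb c (m - 1 - (i:ℕ))
            (itb c (i:ℕ) (a₀ * a₁ - a₁ * a₀) * D c
              - D c * itb c (i:ℕ) (a₀ * a₁ - a₁ * a₀)) := by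
  set A : Fin (m+2) → R := fun j => if (j:ℕ) = 0 then a₀ else if (j:ℕ) = 1 then a₁ else c
    with hA
  have hA0 : A 0 = a₀ := by simp [hA]
  have hA1 : A 1 = a₁ := by simp [hA]
  have htail : ∀ j : Fin (m+2), 2 ≤ (j:ℕ) → A j = c := by
    intro j hj
    simp only [hA]
    rw [if_neg (by omega), if_neg (by omega)]
  have h := hD A
  rw [pn_aux m c A htail, hA0, hA1] at h
  rw [Fin.sum_univ_succ, Fin.sum_univ_succ] at h
  rw [hA0, pn_upd0 m A c (D a₀) htail, hA1] at h
  simp only [Fin.succ_zero_eq_one] at h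
  rw [hA1, pn_upd1 m A c (D a₁) htail, hA0] at h
  have hsum : ∀ i : Fin m,
      pn (m+2) (Function.update A i.succ.succ (D (A i.succ.succ)))
        = itb c (m - 1 - (i:ℕ))
            (itb c (i:ℕ) (a₀ * a₁ - a₁ * a₀) * D c
              - D c * itb c (i:ℕ) (a₀ * a₁ - a₁ * a₀)) := by
    intro i
    have hm : ∃ q, m = q + 1 := ⟨m - 1, by have := i.isLt; omega⟩
    obtain ⟨q, rfl⟩ := hm
    rw [htail i.succ.succ (by simp [Fin.val_succ])]
    have := pn_updj q A c (D c) htail i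
    rw [this, hA0, hA1]
    simp only [Nat.add_sub_cancel]
  rw [Finset.sum_congr rfl (fun i _ => hsum i)] at h
  rw [add_assoc]
  exact h

end UPD

section Master
variable {R : Type*} [NonAssocRing R]

lemma cancel_neg_one_pow {z₁ z₂ : R} (m : ℕ) (h : ((-1:ℤ)^m) • z₁ = ((-1:ℤ)^m) • z₂) :
    z₁ = z₂ := by
  have h2 := congrArg (fun t => ((-1:ℤ)^m) • t) h
  simp only [smul_smul, ← pow_add] at h2
  rw [Even.neg_one_pow ⟨m, rfl⟩, one_smul, one_smul] at h2
  exact h2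

lemma master (halt : IsAlt R) (e : R) (he : e*e = e)
    (n : ℕ) (hn : 2 ≤ n) (htor : ∀ y : R, (n-1) • y = 0 → y = 0)
    (D : R → R) (hD : IsMultLieNDeriv n D) (x : R) (hx1 : e*x = x) (hx2 : x*e = 0) :
    ph e (x * D e - D e * x) = 0 ∧ ph e (x * D (1-e) - D (1-e) * x) = 0 := by
  obtain ⟨m, rfl⟩ : ∃ m, n = m + 2 := ⟨n-2, by omega⟩
  have htor' : ∀ y : R, (m+1) • y = 0 → y = 0 := by
    intro y hy
    exact htor y (by simpa using hy)
  have hbase1 : e*x - x*e = x := by rw [hx1, hx2, sub_zero]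
  have hbase2 : (1-e)*x - x*(1-e) = -x := by
    simp only [sub_mul, mul_sub, one_mul, mul_one, hx1, hx2]
    abel
  have hbase3 : x*e - e*x = -x := by rw [hx1, hx2, zero_sub]
  -- Equation 6 : tuple (e, x, f, f, ..., f)
  have E6 := EQgen m D hD e x (1-e)
  rw [hbase1] at E6
  simp only [itb_f_P12 hx1 hx2] at E6
  have h6 := congrArg (⇑(ph e)) E6
  rw [map_add, map_add, map_sum] at h6
  have p61 : ph e (itb (1-e) m (D e * x - x * D e))
      = -(ph e (x * D e - D e * x)) := by
    rw [ph_itb_f halt he, show D e * x - x * D e = -(x*D e - D e*x) from (neg_sub _ _).symm,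
      map_neg]
  have p62 : ph e (itb (1-e) m (e * D x - D x * e)) = ph e (D x) := by
    rw [ph_itb_f halt he, map_sub, ph_e_mul halt he, ph_mul_e halt he, sub_zero]
  have p63 : ∀ i : Fin m, ph e (itb (1-e) (m - 1 - (i:ℕ)) (x * D (1-e) - D (1-e) * x))
      = ph e (x * D (1-e) - D (1-e) * x) := fun i => ph_itb_f halt he _ _
  rw [p61, p62, Finset.sum_congr rfl (fun i _ => p63 i), Finset.sum_const,
    Finset.card_univ, Fintype.card_fin] at h6
  -- Equations 3 and 5 share the same left-hand side
  have E3 := EQgen m D hD (1-e) x e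
  rw [hbase2] at E3
  have E5 := EQgen m D hD x e e
  rw [hbase3] at E5
  have h35 := congrArg (⇑(ph e)) (E3.symm.trans E5)
  rw [map_add, map_add, map_add, map_add, map_sum] at h35
  have p31 : ph e (itb e m (D (1-e) * x - x * D (1-e)))
      = ((-1:ℤ)^m) • (-(ph e (x * D (1-e) - D (1-e) * x))) := by
    rw [ph_itb_e halt he,
      show D (1-e) * x - x * D (1-e) = -(x*D (1-e) - D (1-e)*x) from (neg_sub _ _).symm,
      map_neg]
  have p32 : ph e (itb e m ((1-e) * D x - D x * (1-e)))
      = ((-1:ℤ)^m) • (-(ph e (D x))) := by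
    have hin : (1-e) * D x - D x * (1-e) = D x * e - e * D x := by
      simp only [sub_mul, mul_sub, one_mul, mul_one]; abel
    rw [ph_itb_e halt he, hin, map_sub, ph_mul_e halt he, ph_e_mul halt he, zero_sub]
  have p51 : ph e (itb e m (D x * e - e * D x)) = ((-1:ℤ)^m) • (-(ph e (D x))) := by
    rw [ph_itb_e halt he, map_sub, ph_mul_e halt he, ph_e_mul halt he, zero_sub]
  have p52 : ph e (itb e m (x * D e - D e * x))
      = ((-1:ℤ)^m) • (ph e (x * D e - D e * x)) := ph_itb_e halt he _ m
  rw [p31, p32, p51, p52] at h35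
  -- cancel the common sum and the common middle term
  have h35' := add_right_cancel h35
  rw [add_comm (((-1:ℤ)^m) • (-(ph e (D x))))
      (((-1:ℤ)^m) • (ph e (x * D e - D e * x)))] at h35'
  have h35'' := add_right_cancel h35'
  have hrel : -(ph e (x * D (1-e) - D (1-e) * x)) = ph e (x * D e - D e * x) :=
    cancel_neg_one_pow m h35''
  -- now the arithmetic
  set C := ph e (x * D e - D e * x) with hC
  set C' := ph e (x * D (1-e) - D (1-e) * x) with hC'
  set Pv := ph e (D x) with hPv
  -- h6 : Pv = -C + Pv + m • C'
  have hc6 : C = m • C' := by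
    have h4 := congrArg (fun t => t + (C - Pv)) h6
    have l : Pv + (C - Pv) = C := by abel
    have r : -C + Pv + m • C' + (C - Pv) = m • C' := by abel
    rw [l, r] at h4
    exact h4
  have hCC' : C' = -C := by
    have := hrel
    rw [neg_eq_iff_eq_neg] at this
    exact this
  have hkey : C = -(m • C) := by
    calc C = m • C' := hc6
    _ = m • (-C) := by rw [hCC']
    _ = -(m • C) := smul_neg m C
  have hzero : (m+1) • C = 0 := by
    rw [succ_nsmul, add_comm]
    exact eq_neg_iff_add_eq_zero.mp hkey
  have hC0 : C = 0 := htor' C hzero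
  exact ⟨hC0, by rw [hCC', hC0, neg_zero]⟩

end Master

section Decomp
variable {R : Type*} [NonAssocRing R]

lemma d11_mem (halt : IsAlt R) {e : R} (he : e*e = e) (y : R) :
    e*(e*(y*e)) = e*(y*e) ∧ (e*(y*e))*e = e*(y*e) := by
  refine ⟨e_mul_e_mul halt he _, ?_⟩
  rw [flex halt e (y*e), mul_e_mul_e halt he]

lemma d12_mem (halt : IsAlt R) {e : R} (he : e*e = e) (y : R) :
    e*(e*y - e*(y*e)) = e*y - e*(y*e) ∧ (e*y - e*(y*e))*e = 0 := by
  constructor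
  · rw [mul_sub, e_mul_e_mul halt he, e_mul_e_mul halt he]
  · rw [sub_mul, flex halt e y, (d11_mem halt he y).2, sub_self]

lemma d21_mem (halt : IsAlt R) {e : R} (he : e*e = e) (y : R) :
    e*(y*e - e*(y*e)) = 0 ∧ (y*e - e*(y*e))*e = y*e - e*(y*e) := by
  constructor
  · rw [mul_sub, e_mul_e_mul halt he, sub_self]
  · rw [sub_mul, mul_e_mul_e halt he, (d11_mem halt he y).2]

lemma d22_mem (halt : IsAlt R) {e : R} (he : e*e = e) (y : R) :
    e*(y - e*y - y*e + e*(y*e)) = 0 ∧ (y - e*y - y*e + e*(y*e))*e = 0 := by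
  constructor
  · rw [mul_add, mul_sub, mul_sub, e_mul_e_mul halt he, e_mul_e_mul halt he]
    abel
  · rw [add_mul, sub_mul, sub_mul, flex halt e y, mul_e_mul_e halt he,
      (d11_mem halt he y).2]
    abel

lemma ph_comm (halt : IsAlt R) {e : R} (he : e*e = e) {x : R}
    (hx1 : e*x = x) (hx2 : x*e = 0) (y : R) :
    ph e (x*y - y*x) = x * (y - e*y - y*e + e*(y*e)) - (e*(y*e)) * x := by
  have h11 := d11_mem halt he y
  have h12 := d12_mem halt he y
  have h21 := d21_mem halt he y
  have h22 := d22_mem halt he y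
  rw [map_sub]
  have hxy : ph e (x*y) = x * (y - e*y - y*e + e*(y*e)) := by
    have hsplit : x*y = x*(e*(y*e)) + x*(e*y - e*(y*e)) + x*(y*e - e*(y*e))
        + x*(y - e*y - y*e + e*(y*e)) := by
      rw [← mul_add, ← mul_add, ← mul_add]
      congr 1
      abel
    rw [hsplit, map_add, map_add, map_add]
    rw [t1 halt hx1 hx2 h11.1 h11.2, map_zero]
    rw [ph_of_P21 (t2 halt hx1 hx2 h12.1 h12.2).1 (t2 halt hx1 hx2 h12.1 h12.2).2]
    rw [ph_of_P11 (t3 halt hx1 hx2 h21.1 h21.2).1 (t3 halt hx1 hx2 h21.1 h21.2).2]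
    rw [ph_of_P12 (t4 halt hx1 hx2 h22.1 h22.2).1 (t4 halt hx1 hx2 h22.1 h22.2).2]
    abel
  have hyx : ph e (y*x) = (e*(y*e)) * x := by
    have hsplit : y*x = (e*(y*e))*x + (e*y - e*(y*e))*x + (y*e - e*(y*e))*x
        + (y - e*y - y*e + e*(y*e))*x := by
      rw [← add_mul, ← add_mul, ← add_mul]
      congr 1
      abel
    rw [hsplit, map_add, map_add, map_add]
    rw [ph_of_P12 (t5 halt h11.1 h11.2 hx1 hx2).1 (t5 halt h11.1 h11.2 hx1 hx2).2]
    rw [ph_of_P21 (t2 halt h12.1 h12.2 hx1 hx2).1 (t2 halt h12.1 h12.2 hx1 hx2).2]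
    rw [ph_of_P22 (t7 halt h21.1 h21.2 hx1 hx2).1 (t7 halt h21.1 h21.2 hx1 hx2).2]
    rw [t8 halt h22.1 h22.2 hx1 hx2, map_zero]
    abel
  rw [hxy, hyx]

end Decomp


theorem stmt11 {R : Type*} [NonAssocRing R] (halt : IsAlt R)
    (e₁ e₂ : R) (he₂ : e₂ = 1 - e₁)
    (he : e₁ * e₁ = e₁) (hne0 : e₁ ≠ 0) (hne1 : e₁ ≠ 1)
    (n : ℕ) (hn : 2 ≤ n)
    (htor : ∀ k ∈ ({2, 3, n - 1, n - 3} : Set ℕ), 1 ≤ k → ∀ x : R, k • x = 0 → x = 0)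
    (hc1 : (∀ x ∈ P12 e₁, (∀ y ∈ P21 e₁, x * y = 0) → x = 0) ∧
           (∀ x ∈ P21 e₁, (∀ y ∈ P12 e₁, x * y = 0) → x = 0))
    (hc2 : (∀ x ∈ P11 e₁, (∀ y ∈ P12 e₁, x * y = 0) → x = 0) ∧
           (∀ x ∈ P11 e₁, (∀ y ∈ P21 e₁, y * x = 0) → x = 0))
    (hc3 : (∀ x ∈ P22 e₁, (∀ y ∈ P12 e₁, y * x = 0) → x = 0) ∧
           (∀ x ∈ P22 e₁, (∀ y ∈ P21 e₁, x * y = 0) → x = 0))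
    (hc4 : ∀ z ∈ rctr R, z ≠ 0 → ∀ r : R, ∃ s : R, z * s = r)
    (D : R → R) (hD : IsMultLieNDeriv n D)
    :
    (e₁ * D e₁) * e₁ + (e₂ * D e₁) * e₂ ∈ rctr R := by

  have h3tor : ∀ z : R, z + z + z = 0 → z = 0 := by
    intro z hz
    refine htor 3 (by simp) (by norm_num) z ?_
    show (3:ℕ) • z = 0
    rw [show (3:ℕ) = 2 + 1 from rfl, add_nsmul, two_nsmul, one_nsmul]
    exact hz
  have htor1 : ∀ y : R, (n-1) • y = 0 → y = 0 := by
    intro y hy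
    exact htor (n-1) (by simp) (by omega) y hy
  have hf2 : e₂*e₂ = e₂ := by
    rw [he₂]; simp only [sub_mul, mul_sub, one_mul, mul_one, he]; abel
  have h1me2 : (1:R) - e₂ = e₁ := by rw [he₂]; exact sub_sub_cancel 1 e₁
  set b := D e₁ with hbdef
  set b11 := e₁*(b*e₁) with hb11
  set b22 := b - e₁*b - b*e₁ + e₁*(b*e₁) with hb22
  have hb11m : e₁*b11 = b11 ∧ b11*e₁ = b11 := by
    rw [hb11]; exact d11_mem halt he b
  have hb22m : e₁*b22 = 0 ∧ b22*e₁ = 0 := by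
    rw [hb22]; exact d22_mem halt he b
  have hE1 : e₂*(b*e₂) = b22 := by
    rw [hb22, he₂]; simp only [mul_sub, sub_mul, mul_one, one_mul]; abel
  have hE2 : b - e₂*b - b*e₂ + e₂*(b*e₂) = b11 := by
    rw [hb11, he₂]; simp only [mul_sub, sub_mul, mul_one, one_mul]; abel
  -- e₂-side memberships
  have hb22e2 : e₂*b22 = b22 ∧ b22*e₂ = b22 := by
    constructor
    · rw [he₂, sub_mul, one_mul, hb22m.1, sub_zero]
    · rw [he₂, mul_sub, mul_one, hb22m.2, sub_zero]
  have hb11e2 : e₂*b11 = 0 ∧ b11*e₂ = 0 := by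
    constructor
    · rw [he₂, sub_mul, one_mul, hb11m.1, sub_self]
    · rw [he₂, mul_sub, mul_one, hb11m.2, sub_self]
  -- key relations
  have K1 : ∀ x : R, e₁*x = x → x*e₁ = 0 → b11 * x = x * b22 := by
    intro x hx1 hx2
    have hm := (master halt e₁ he n hn htor1 D hD x hx1 hx2).1
    have hc := ph_comm halt he hx1 hx2 b
    rw [← hb22, ← hb11, hm] at hc
    exact (sub_eq_zero.mp hc.symm).symm
  have K2 : ∀ z : R, e₂*z = z → z*e₂ = 0 → b22 * z = z * b11 := by
    intro z hz1 hz2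
    have hm := (master halt e₂ hf2 n hn htor1 D hD z hz1 hz2).2
    rw [h1me2, ← hbdef] at hm
    have hc := ph_comm halt hf2 hz1 hz2 b
    rw [hE2, hE1, hm] at hc
    exact (sub_eq_zero.mp hc.symm).symm
  -- componentwise commutation
  have comm12 : ∀ x : R, e₁*x = x → x*e₁ = 0 → (b11+b22)*x = x*(b11+b22) := by
    intro x h1 h2
    rw [add_mul, mul_add, t8 halt hb22m.1 hb22m.2 h1 h2,
      t1 halt h1 h2 hb11m.1 hb11m.2, add_zero, zero_add]
    exact K1 x h1 h2
  have comm21 : ∀ z : R, e₁*z = 0 → z*e₁ = z → (b11+b22)*z = z*(b11+b22) := by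
    intro z h1 h2
    have h1' : e₂*z = z := by rw [he₂, sub_mul, one_mul, h1, sub_zero]
    have h2' : z*e₂ = 0 := by rw [he₂, mul_sub, mul_one, h2, sub_self]
    rw [add_mul, mul_add, t8 halt hb11e2.1 hb11e2.2 h1' h2',
      t1 halt h1' h2' hb22e2.1 hb22e2.2, zero_add, add_zero]
    exact K2 z h1' h2'
  have comm11 : ∀ u : R, e₁*u = u → u*e₁ = u → (b11+b22)*u = u*(b11+b22) := by
    intro u h1 h2
    have h9 := t9 halt h3tor hb22m.1 hb22m.2 h1 h2
    have hcomm : b11*u = u*b11 := by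
      have m1 := t11 halt hb11m.1 hb11m.2 h1 h2
      have m2 := t11 halt h1 h2 hb11m.1 hb11m.2
      have hzero : b11*u - u*b11 = 0 := by
        apply hc2.1 _ ⟨by rw [mul_sub, m1.1, m2.1], by rw [sub_mul, m1.2, m2.2]⟩
        intro y hy
        obtain ⟨hy1, hy2⟩ := hy
        have a1 : (b11*u)*y = b11*(u*y) := t10 halt hb11m.1 hb11m.2 h1 h2 hy1 hy2
        have a2 : (u*b11)*y = u*(b11*y) := t10 halt h1 h2 hb11m.1 hb11m.2 hy1 hy2
        have huy := t5 halt h1 h2 hy1 hy2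
        have k1 : b11*(u*y) = (u*y)*b22 := K1 _ huy.1 huy.2
        have k2 : b11*y = y*b22 := K1 y hy1 hy2
        have a3 : (u*y)*b22 = u*(y*b22) := t12 halt h3tor h1 h2 hy1 hy2 hb22m.1 hb22m.2
        rw [sub_mul, a1, a2, k1, k2, a3, sub_self]
      exact sub_eq_zero.mp hzero
    rw [add_mul, mul_add, h9.1, h9.2, add_zero, add_zero, hcomm]
  have comm22 : ∀ s : R, e₁*s = 0 → s*e₁ = 0 → (b11+b22)*s = s*(b11+b22) := by
    intro s h1 h2
    have h1' : e₂*s = s := by rw [he₂, sub_mul, one_mul, h1, sub_zero]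
    have h2' : s*e₂ = s := by rw [he₂, mul_sub, mul_one, h2, sub_zero]
    have h9 := t9 halt h3tor hb11e2.1 hb11e2.2 h1' h2'
    have hcomm : b22*s = s*b22 := by
      have m1 := t11 halt hb22e2.1 hb22e2.2 h1' h2'
      have m2 := t11 halt h1' h2' hb22e2.1 hb22e2.2
      -- back-translate memberships to e₁
      have hm1 : e₁*(b22*s - s*b22) = 0 := by
        rw [← h1me2, sub_mul, one_mul, mul_sub, m1.1, m2.1]
        abel
      have hm2 : (b22*s - s*b22)*e₁ = 0 := by
        rw [← h1me2, mul_sub, mul_one, sub_mul, m1.2, m2.2]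
        abel
      have hzero : b22*s - s*b22 = 0 := by
        apply hc3.2 _ ⟨hm1, hm2⟩
        intro z hz
        obtain ⟨hz1, hz2⟩ := hz
        have hz1' : e₂*z = z := by rw [he₂, sub_mul, one_mul, hz1, sub_zero]
        have hz2' : z*e₂ = 0 := by rw [he₂, mul_sub, mul_one, hz2, sub_self]
        have a1 : (b22*s)*z = b22*(s*z) := t10 halt hb22e2.1 hb22e2.2 h1' h2' hz1' hz2'
        have a2 : (s*b22)*z = s*(b22*z) := t10 halt h1' h2' hb22e2.1 hb22e2.2 hz1' hz2'
        have hsz := t5 halt h1' h2' hz1' hz2'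
        have k1 : b22*(s*z) = (s*z)*b11 := K2 _ hsz.1 hsz.2
        have k2 : b22*z = z*b11 := K2 z hz1' hz2'
        have a3 : (s*z)*b11 = s*(z*b11) := t12 halt h3tor h1' h2' hz1' hz2' hb11e2.1 hb11e2.2
        rw [sub_mul, a1, a2, k1, k2, a3, sub_self]
      exact sub_eq_zero.mp hzero
    rw [add_mul, mul_add, h9.1, h9.2, zero_add, zero_add, hcomm]
  -- main commutation with arbitrary r
  have hmain : ∀ r : R, (b11 + b22) * r = r * (b11 + b22) := by
    intro r
    have hr11 := d11_mem halt he r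
    have hr12 := d12_mem halt he r
    have hr21 := d21_mem halt he r
    have hr22 := d22_mem halt he r
    calc (b11+b22)*r
        = (b11+b22)*(e₁*(r*e₁)) + (b11+b22)*(e₁*r - e₁*(r*e₁))
          + (b11+b22)*(r*e₁ - e₁*(r*e₁)) + (b11+b22)*(r - e₁*r - r*e₁ + e₁*(r*e₁)) := by
          rw [← mul_add, ← mul_add, ← mul_add]
          congr 1
          abel
      _ = (e₁*(r*e₁))*(b11+b22) + (e₁*r - e₁*(r*e₁))*(b11+b22)
          + (r*e₁ - e₁*(r*e₁))*(b11+b22) + (r - e₁*r - r*e₁ + e₁*(r*e₁))*(b11+b22) := by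
          rw [comm11 _ hr11.1 hr11.2, comm12 _ hr12.1 hr12.2,
            comm21 _ hr21.1 hr21.2, comm22 _ hr22.1 hr22.2]
      _ = r*(b11+b22) := by
          rw [← add_mul, ← add_mul, ← add_mul]
          congr 1
          abel
  have hgoal : (e₁ * b) * e₁ + (e₂ * b) * e₂ = b11 + b22 := by
    rw [flex halt e₁ b, flex halt e₂ b, hE1, ← hb11]
  show ∀ r : R, _ * r = r * _
  rw [hgoal]
  exact hmain
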